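/- Uniqueness of nonzero asymptotic equilibrium: under the hypotheses of the positivity theorem, if the limit f_∞ = lim_{t→∞} f(t) exists, then f_∞ = 1. -/

import Mathlib

open Real Set Filter

/-- Positivity of solutions. -/
lemma stmt_18_pos (βt βs γs : ℝ)
    (φ f : ℝ → ℝ)
    (hφpos : ∀ t ∈ Set.Icc (-1 : ℝ) 0, 0 < φ t)
    (hfcont : ContinuousOn f (Set.Ici (-1 : ℝ)))
    (hde : ∀ t : ℝ, 0 < t →
      HasDerivAt f (βt * f t * (1 - βs * f t - γs * f (t - 1))) t)
    (hinit : ∀ t ∈ Set.Icc (-1 : ℝ) 0, f t = φ t) :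
    ∀ t : ℝ, -1 ≤ t → 0 < f t := by
  set g : ℝ → ℝ := fun s => βt * (1 - βs * f s - γs * f (s - 1)) with hg_def
  have hsub : ContinuousOn (fun s : ℝ => f (s - 1)) (Set.Ici (0 : ℝ)) := by
    apply hfcont.comp ((continuous_sub_right (1:ℝ)).continuousOn)
    intro s hs
    simp only [Set.mem_Ici] at hs ⊢
    linarith
  have hf0 : ContinuousOn f (Set.Ici (0 : ℝ)) :=
    hfcont.mono (fun x hx => by simp only [Set.mem_Ici] at hx ⊢; linarith)
  have hg_cont : ContinuousOn g (Set.Ici (0 : ℝ)) := by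
    apply continuousOn_const.mul
    exact (continuousOn_const.sub (continuousOn_const.mul hf0)).sub
      (continuousOn_const.mul hsub)
  have hg_at : ∀ t : ℝ, 0 < t → ContinuousAt g t := by
    intro t ht
    have h1 : ContinuousAt f t := hfcont.continuousAt (Ici_mem_nhds (by linarith))
    have h2 : ContinuousAt f (t - 1) := hfcont.continuousAt (Ici_mem_nhds (by linarith))
    have h3 : ContinuousAt (fun s : ℝ => f (s - 1)) t :=
      ContinuousAt.comp h2 (continuousAt_id.sub continuousAt_const)
    exact continuousAt_const.mul
      ((continuousAt_const.sub (continuousAt_const.mul h1)).sub (continuousAt_const.mul h3))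
  have hg_contOn_Ioi : ContinuousOn g (Set.Ioi (0 : ℝ)) :=
    fun x hx => (hg_at x hx).continuousWithinAt
  have hf0pos : 0 < f 0 := by
    rw [hinit 0 (by norm_num)]
    exact hφpos 0 (by norm_num)
  intro b hb
  rcases le_or_gt b 0 with hb0 | hb0
  · rw [hinit b ⟨hb, hb0⟩]; exact hφpos b ⟨hb, hb0⟩
  -- b > 0 : use the representation f b = f 0 * exp (∫ g)
  set G : ℝ → ℝ := fun u => ∫ x in (0:ℝ)..u, g x with hG_def
  have hint : ∀ u : ℝ, 0 ≤ u → IntervalIntegrable g MeasureTheory.volume 0 u := by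
    intro u hu
    apply ContinuousOn.intervalIntegrable
    apply hg_cont.mono
    rw [Set.uIcc_of_le hu]
    exact fun x hx => hx.1
  have hG : ∀ t ∈ Set.Ioo (0:ℝ) b, HasDerivAt G (g t) t := by
    intro t ht
    exact intervalIntegral.integral_hasDerivAt_right (hint t ht.1.le)
      (hg_contOn_Ioi.stronglyMeasurableAtFilter isOpen_Ioi t ht.1)
      (hg_at t ht.1)
  have hG_cont : ContinuousOn G (Set.Icc (0:ℝ) b) := by
    have := intervalIntegral.continuousOn_primitive_interval
      (f := g) (μ := MeasureTheory.volume) (a := 0) (b := b)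
      ((hg_cont.mono (by rw [Set.uIcc_of_le hb0.le]; exact fun x hx => hx.1)).integrableOn_compact
        (by rw [Set.uIcc_of_le hb0.le]; exact isCompact_Icc))
    rwa [Set.uIcc_of_le hb0.le] at this
  set h : ℝ → ℝ := fun u => f u * Real.exp (-(G u)) with hh_def
  have hh_deriv : ∀ t ∈ Set.Ioo (0:ℝ) b, HasDerivAt h 0 t := by
    intro t ht
    have h1 := hde t ht.1
    have h2 : HasDerivAt (fun u => Real.exp (-(G u))) (Real.exp (-(G t)) * (-(g t))) t :=
      HasDerivAt.exp ((hG t ht).neg)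
    have h3 : HasDerivAt h (βt * f t * (1 - βs * f t - γs * f (t - 1)) * Real.exp (-(G t))
        + f t * (Real.exp (-(G t)) * (-(g t)))) t := h1.mul h2
    convert h3 using 1
    simp only [hg_def]
    ring
  have hh_cont : ContinuousOn h (Set.Icc (0:ℝ) b) := by
    apply ContinuousOn.mul
    · exact hf0.mono (fun x hx => hx.1)
    · exact (hG_cont.neg).rexp
  have hIoo : Set.Ioo (0:ℝ) b = interior (Set.Icc (0:ℝ) b) := (interior_Icc).symm
  have hdiff : DifferentiableOn ℝ h (interior (Set.Icc (0:ℝ) b)) := by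
    rw [← hIoo]; exact fun x hx => ((hh_deriv x hx).differentiableAt).differentiableWithinAt
  have hderiv0 : ∀ x ∈ interior (Set.Icc (0:ℝ) b), deriv h x = 0 := by
    rw [← hIoo]; exact fun x hx => (hh_deriv x hx).deriv
  have hmono : MonotoneOn h (Set.Icc (0:ℝ) b) :=
    monotoneOn_of_deriv_nonneg (convex_Icc _ _) hh_cont hdiff
      (fun x hx => le_of_eq (hderiv0 x hx).symm)
  have hanti : AntitoneOn h (Set.Icc (0:ℝ) b) :=
    antitoneOn_of_deriv_nonpos (convex_Icc _ _) hh_cont hdiff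
      (fun x hx => le_of_eq (hderiv0 x hx))
  have h0mem : (0:ℝ) ∈ Set.Icc (0:ℝ) b := ⟨le_refl _, hb0.le⟩
  have hbmem : b ∈ Set.Icc (0:ℝ) b := ⟨hb0.le, le_refl _⟩
  have heq : h b = h 0 :=
    le_antisymm (hanti h0mem hbmem hb0.le) (hmono h0mem hbmem hb0.le)
  have hG0 : G 0 = 0 := by simp [hG_def]
  have hh0 : h 0 = f 0 := by simp [hh_def, hG0]
  have hpos : 0 < f b * Real.exp (-(G b)) := by
    rw [show f b * Real.exp (-(G b)) = h b from rfl, heq, hh0]; exact hf0pos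
  nlinarith [Real.exp_pos (-(G b))]

theorem stmt_18 (βt βs γs : ℝ) (hβt : 0 < βt) (hβs : 0 < βs) (hγs : 0 < γs)
    (hsum : βs + γs = 1)
    (φ f : ℝ → ℝ) (finf : ℝ)
    (hφcont : ContinuousOn φ (Set.Icc (-1 : ℝ) 0))
    (hφpos : ∀ t ∈ Set.Icc (-1 : ℝ) 0, 0 < φ t)
    (hfcont : ContinuousOn f (Set.Ici (-1 : ℝ)))
    (hde : ∀ t : ℝ, 0 < t →
      HasDerivAt f (βt * f t * (1 - βs * f t - γs * f (t - 1))) t)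
    (hinit : ∀ t ∈ Set.Icc (-1 : ℝ) 0, f t = φ t)
    (hlim : Filter.Tendsto f Filter.atTop (nhds finf)) :
    finf = 1 := by
  have hpos := stmt_18_pos βt βs γs φ f hφpos hfcont hde hinit
  -- Step 1: Mean value theorem on [n+1, n+2] gives a point cₙ with
  -- f' cₙ = f (n+2) - f (n+1).
  have hmvt : ∀ n : ℕ, ∃ c ∈ Set.Ioo ((n:ℝ)+1) ((n:ℝ)+2),
      βt * f c * (1 - βs * f c - γs * f (c - 1)) = f ((n:ℝ)+2) - f ((n:ℝ)+1) := by
    intro n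
    have hab : ((n:ℝ)+1) < (n:ℝ)+2 := by linarith
    have hcont : ContinuousOn f (Set.Icc ((n:ℝ)+1) ((n:ℝ)+2)) := by
      apply hfcont.mono
      intro x hx
      have : (0:ℝ) ≤ n := Nat.cast_nonneg n
      simp only [Set.mem_Icc] at hx
      simp only [Set.mem_Ici]
      linarith [hx.1]
    have := exists_hasDerivAt_eq_slope f
      (fun t => βt * f t * (1 - βs * f t - γs * f (t - 1))) hab hcont
      (fun x hx => hde x (by
        have : (0:ℝ) ≤ n := Nat.cast_nonneg n
        simp only [Set.mem_Ioo] at hx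
        linarith [hx.1]))
    obtain ⟨c, hc, hceq⟩ := this
    refine ⟨c, hc, ?_⟩
    have hceq' : βt * f c * (1 - βs * f c - γs * f (c - 1))
        = (f ((n:ℝ)+2) - f ((n:ℝ)+1)) / ((n:ℝ)+2 - ((n:ℝ)+1)) := hceq
    rw [hceq']
    field_simp
    ring
  choose c hcmem hceq using hmvt
  have hc_tendsto : Tendsto c atTop atTop := by
    apply tendsto_atTop_mono (fun n => ((hcmem n).1).le)
    apply tendsto_atTop_add_const_right
    exact tendsto_natCast_atTop_atTop
  have hc1_tendsto : Tendsto (fun n => c n - 1) atTop atTop :=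
    tendsto_atTop_add_const_right _ (-1) hc_tendsto |>.congr (fun n => by ring_nf)
  have hfc : Tendsto (fun n => f (c n)) atTop (nhds finf) := hlim.comp hc_tendsto
  have hfc1 : Tendsto (fun n => f (c n - 1)) atTop (nhds finf) := hlim.comp hc1_tendsto
  have hL : Tendsto (fun n => βt * f (c n) * (1 - βs * f (c n) - γs * f (c n - 1)))
      atTop (nhds (βt * finf * (1 - βs * finf - γs * finf))) := by
    exact (tendsto_const_nhds.mul hfc).mul
      ((tendsto_const_nhds.sub (tendsto_const_nhds.mul hfc)).sub
        (tendsto_const_nhds.mul hfc1))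
  have hdiff0 : Tendsto (fun n : ℕ => f ((n:ℝ)+2) - f ((n:ℝ)+1)) atTop (nhds 0) := by
    have h2 : Tendsto (fun n : ℕ => f ((n:ℝ)+2)) atTop (nhds finf) :=
      hlim.comp (tendsto_atTop_add_const_right _ 2 tendsto_natCast_atTop_atTop)
    have h1 : Tendsto (fun n : ℕ => f ((n:ℝ)+1)) atTop (nhds finf) :=
      hlim.comp (tendsto_atTop_add_const_right _ 1 tendsto_natCast_atTop_atTop)
    have := h2.sub h1
    simpa using this
  have hkey : βt * finf * (1 - βs * finf - γs * finf) = 0 := by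
    apply tendsto_nhds_unique hL
    exact hdiff0.congr (fun n => (hceq n).symm)
  have hquad : finf * (1 - finf) = 0 := by
    have hβt' : βt ≠ 0 := ne_of_gt hβt
    have : βt * (finf * (1 - finf)) = 0 := by
      linear_combination hkey + βt * finf^2 * hsum
    exact (mul_eq_zero.mp this).resolve_left hβt'
  rcases mul_eq_zero.mp hquad with h0 | h1
  · -- finf = 0: contradiction via eventual monotonicity
    exfalso
    subst h0
    have hsmall : ∀ᶠ t in atTop, f t < 1/2 := by
      have : Set.Iio (1/2 : ℝ) ∈ nhds (0:ℝ) := Iio_mem_nhds (by norm_num)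
      exact hlim this
    obtain ⟨T₀, hT₀⟩ := eventually_atTop.mp hsmall
    set T : ℝ := max T₀ 0 with hT_def
    have hT0 : 0 ≤ T := le_max_right _ _
    have hTsm : ∀ t : ℝ, T ≤ t → f t < 1/2 := fun t ht => hT₀ t ((le_max_left _ _).trans ht)
    have hderivpos : ∀ x ∈ interior (Set.Ici (T+1)), 0 < deriv f x := by
      intro x hx
      rw [interior_Ici] at hx
      have hx' : T + 1 < x := hx
      have hfx : 0 < f x := hpos x (by linarith)
      have h1 : f x < 1/2 := hTsm x (by linarith)
      have h2 : f (x - 1) < 1/2 := hTsm (x-1) (by linarith)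
      rw [(hde x (by linarith)).deriv]
      have hfx1 : 0 < f (x - 1) := hpos (x-1) (by linarith)
      have hb : (1:ℝ)/2 < 1 - βs * f x - γs * f (x - 1) := by
        nlinarith [mul_lt_mul_of_pos_left h1 hβs, mul_lt_mul_of_pos_left h2 hγs]
      exact mul_pos (mul_pos hβt hfx) (by linarith)
    have hsm : StrictMonoOn f (Set.Ici (T+1)) := by
      apply strictMonoOn_of_deriv_pos (convex_Ici _)
      · exact hfcont.mono (fun x hx => by
          simp only [Set.mem_Ici] at hx ⊢; linarith)
      · exact hderivpos
    have hmono : MonotoneOn f (Set.Ici (T+1)) := hsm.monotoneOn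
    have hev : ∀ᶠ t in atTop, f (T+2) ≤ f t := by
      rw [eventually_atTop]
      exact ⟨T+2, fun t ht => hmono (by simp only [Set.mem_Ici]; linarith)
        (by simp only [Set.mem_Ici]; linarith) ht⟩
    have : f (T+2) ≤ 0 := ge_of_tendsto hlim hev
    have : 0 < f (T+2) := hpos (T+2) (by linarith)
    linarith
  · linarith
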